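/- Let 𝒢 be a GRN with associated PRN ℛ, and let σ₁, σ₂ be two distinct appendage nodes of 𝒢. There is an appendage path from σ₁ to σ₂ in 𝒢 if and only if there is an appendage path from (σ₁,P) to (σ₂,R) in ℛ; moreover every appendage path from (σ₁,P) to (σ₂,R) in ℛ has the form (σ₁,P) → (τ₁,R) → (τ₁,P) → ⋯ → (τ_m,R) → (τ_m,P) → (σ₂,R) for some appendage path σ₁ → τ₁ → ⋯ → τ_m → σ₂ in 𝒢. -/

import Mathlib

open List Relation

/- In the PRN on `V × Bool`, the node `(v, false)` is the mRNA node `v^R`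
   and `(v, true)` is the protein node `v^P`. -/

/-- Arrow relation of the PRN associated to a GRN with arrow relation `E`:
arrows `(v,R) → (v,P)` for every `v`, and `(u,P) → (v,R)` whenever `E u v`. -/
def prnAdj {V : Type*} (E : V → V → Prop) : V × Bool → V × Bool → Prop :=
  fun a b =>
    (a.1 = b.1 ∧ a.2 = false ∧ b.2 = true) ∨
    (E a.1 b.1 ∧ a.2 = true ∧ b.2 = false)

/-- The lift of a path `σ₁ → ⋯ → σ_m` in the GRN to the path
`(σ₁,R) → (σ₁,P) → ⋯ → (σ_m,R) → (σ_m,P)` in the PRN. -/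
def liftPath {V : Type*} (l : List V) : List (V × Bool) :=
  l.flatMap fun v => [(v, false), (v, true)]

/-- A simple path: a nonempty directed path visiting each node at most once. -/
def IsSimplePath {V : Type*} (E : V → V → Prop) (l : List V) : Prop :=
  l ≠ [] ∧ l.Chain' E ∧ l.Nodup

/-- A simple path from `a` to `b`. -/
def IsSimplePathFrom {V : Type*} (E : V → V → Prop) (a b : V) (l : List V) : Prop :=
  IsSimplePath E l ∧ l.head? = some a ∧ l.getLast? = some b

/-- A node is simple if it lies on some simple path from the input to the output. -/
def IsSimpleNode {V : Type*} (E : V → V → Prop) (ι o v : V) : Prop :=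
  ∃ l, IsSimplePathFrom E ι o l ∧ v ∈ l

/-- A node is super-simple if it lies on every simple path from the input to the output. -/
def IsSuperSimpleNode {V : Type*} (E : V → V → Prop) (ι o v : V) : Prop :=
  ∀ l, IsSimplePathFrom E ι o l → v ∈ l

/-- A node is appendage if it lies on no simple path from the input to the output. -/
def IsAppendageNode {V : Type*} (E : V → V → Prop) (ι o v : V) : Prop :=
  ¬ IsSimpleNode E ι o v

/-- An appendage path from `a` to `b`: a simple path from `a` to `b` each of whose
nodes, except possibly `a` and `b`, is an appendage node. -/
def IsAppendagePath {V : Type*} (E : V → V → Prop) (ι o a b : V) (l : List V) : Prop :=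
  IsSimplePathFrom E a b l ∧ ∀ v ∈ l, v ≠ a → v ≠ b → IsAppendageNode E ι o v

/-- A directed cycle: a nonempty closed directed walk visiting each of its nodes
exactly once (a self-loop is a cycle of length one). -/
def IsCycle {V : Type*} (E : V → V → Prop) (c : List V) : Prop :=
  c ≠ [] ∧ c.Chain' E ∧ c.Nodup ∧
    ∃ a b, c.head? = some a ∧ c.getLast? = some b ∧ E b a

/-- Arrow relation of the appendage subnetwork: the induced subgraph on appendage nodes. -/
def appendageAdj {V : Type*} (E : V → V → Prop) (ι o : V) : V → V → Prop :=
  fun a b => E a b ∧ IsAppendageNode E ι o a ∧ IsAppendageNode E ι o b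

/-- Two appendage nodes are path-equivalent if each is reachable from the other by a
directed path lying entirely within the appendage subnetwork. -/
def PathEquiv {V : Type*} (E : V → V → Prop) (ι o a b : V) : Prop :=
  Relation.ReflTransGen (appendageAdj E ι o) a b ∧
  Relation.ReflTransGen (appendageAdj E ι o) b a

/-- A node `x` is between `a` and `b` if some input-to-output simple path visits
`a`, `x`, `b` in that order. -/
def Between {V : Type*} (E : V → V → Prop) (ι o a x b : V) : Prop :=
  ∃ l, IsSimplePathFrom E ι o l ∧ [a, x, b].Sublist l

section Aux

variable {V : Type*} {E : V → V → Prop}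

@[simp] lemma prn_chain'_nil {α : Type*} {R : α → α → Prop} : List.Chain' R [] := List.IsChain.nil

@[simp] lemma prn_chain'_singleton {α : Type*} {R : α → α → Prop} (a : α) : List.Chain' R [a] :=
  List.IsChain.singleton a

@[simp] lemma prn_chain'_cons {α : Type*} {R : α → α → Prop} {a b : α} {l : List α} :
    List.Chain' R (a :: b :: l) ↔ R a b ∧ List.Chain' R (b :: l) := List.isChain_cons_cons

lemma mem_liftPath {l : List V} {v : V} {b : Bool} :
    (v, b) ∈ liftPath l ↔ v ∈ l := by
  simp only [liftPath, List.mem_flatMap, List.mem_cons, List.mem_singleton, Prod.mk.injEq,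
    List.not_mem_nil, or_false]
  constructor
  · rintro ⟨a, ha, (⟨rfl, _⟩ | ⟨rfl, _⟩)⟩ <;> exact ha
  · intro hv; cases b <;> exact ⟨v, hv, by simp⟩

lemma nodup_liftPath {l : List V} : (liftPath l).Nodup ↔ l.Nodup := by
  rw [liftPath, List.nodup_flatMap]
  constructor
  · rintro ⟨-, h⟩
    refine List.Pairwise.imp_of_mem ?_ h
    intro a b _ _ hd hab
    subst hab
    exact (List.disjoint_left.mp hd (show (a, false) ∈ _ by simp)) (by simp)
  · intro h
    refine ⟨fun x _ => by simp, h.imp ?_⟩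
    intro a b hab
    simp only [Function.onFun, List.disjoint_left]
    aesop

lemma chain'_liftPath {l : List V} (h : l.Chain' E) :
    (liftPath l).Chain' (prnAdj E) := by
  induction l with
  | nil => simp [liftPath]
  | cons a t ih =>
    cases t with
    | nil => simp [liftPath, prnAdj]
    | cons c t' =>
      rw [prn_chain'_cons] at h
      have H := ih h.2
      simp only [liftPath, flatMap_cons, cons_append, nil_append] at H ⊢
      exact prn_chain'_cons.mpr ⟨by simp [prnAdj],
        prn_chain'_cons.mpr ⟨by simp [prnAdj, h.1], H⟩⟩

lemma head?_liftPath {l : List V} :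
    (liftPath l).head? = l.head?.map (fun v => (v, false)) := by
  cases l <;> simp [liftPath]

lemma liftPath_ne_nil {l : List V} (h : l ≠ []) : liftPath l ≠ [] := by
  cases l <;> simp_all [liftPath]

lemma getLast?_liftPath {l : List V} :
    (liftPath l).getLast? = l.getLast?.map (fun v => (v, true)) := by
  induction l with
  | nil => simp [liftPath]
  | cons a t ih =>
    cases t with
    | nil => simp [liftPath]
    | cons b t' =>
      have h1 : liftPath (a :: b :: t') = [(a,false),(a,true)] ++ liftPath (b :: t') := by
        simp [liftPath]
      rw [h1, List.getLast?_append_of_ne_nil _ (liftPath_ne_nil (by simp)), ih,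
        List.getLast?_cons_cons]

/-- chain of lifted appendage path -/
lemma chain'_P2R {a b : V} {ts : List V} (h : (a :: (ts ++ [b])).Chain' E) :
    ((a, true) :: (liftPath ts ++ [(b, false)])).Chain' (prnAdj E) := by
  induction ts generalizing a with
  | nil =>
    simp only [List.nil_append, prn_chain'_cons, prn_chain'_singleton, and_true] at h ⊢
    simp [prnAdj, liftPath, h]
  | cons c ts' ih =>
    rw [List.cons_append, prn_chain'_cons] at h
    have H := ih h.2
    simp only [liftPath, flatMap_cons, cons_append, nil_append] at H ⊢
    exact prn_chain'_cons.mpr ⟨by simp [prnAdj, h.1],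
      prn_chain'_cons.mpr ⟨by simp [prnAdj], H⟩⟩

lemma struct_P2R :
    ∀ (L : List (V × Bool)) (a b : V),
      L.Chain' (prnAdj E) → L.head? = some (a, true) → L.getLast? = some (b, false) →
      ∃ ts, L = (a, true) :: (liftPath ts ++ [(b, false)]) ∧ (a :: (ts ++ [b])).Chain' E
  | [], a, b, _, hh, _ => by simp at hh
  | [x], a, b, _, hh, hl => by
      simp only [List.head?_cons, Option.some_inj, List.getLast?_singleton] at hh hl
      rw [hh] at hl; simp at hl
  | [x, y], a, b, hc, hh, hl => by
      simp only [List.head?_cons, Option.some_inj] at hh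
      subst hh
      simp only [List.getLast?_cons_cons, List.getLast?_singleton, Option.some_inj] at hl
      subst hl
      rw [prn_chain'_cons] at hc
      have hE : E a b := by
        rcases hc.1 with ⟨_, _, h3⟩ | ⟨h1, _, _⟩
        · simp at h3
        · exact h1
      exact ⟨[], by simp [liftPath], by simp [hE]⟩
  | x :: y :: z :: rest', a, b, hc, hh, hl => by
      simp only [List.head?_cons, Option.some_inj] at hh
      subst hh
      rw [prn_chain'_cons] at hc
      obtain ⟨hxy, hc⟩ := hc
      obtain ⟨c, rfl⟩ : ∃ c, y = (c, false) := by
        rcases hxy with ⟨_, h2, _⟩ | ⟨_, _, h3⟩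
        · simp at h2
        · exact ⟨y.1, by simp [h3.symm]⟩
      have hE : E a c := by
        rcases hxy with ⟨_, h2, _⟩ | ⟨h1, _, _⟩
        · simp at h2
        · exact h1
      rw [prn_chain'_cons] at hc
      obtain ⟨hyz, hc⟩ := hc
      obtain rfl : z = (c, true) := by
        obtain ⟨z1, z2⟩ := z
        rcases hyz with ⟨h1, h2, h3⟩ | ⟨_, h2, _⟩ <;> simp_all
      have hl' : (((c, true) : V × Bool) :: rest').getLast? = some (b, false) := by
        rw [List.getLast?_cons_cons, List.getLast?_cons_cons] at hl
        exact hl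
      obtain ⟨ts', heq, hch⟩ := struct_P2R ((c, true) :: rest') c b hc (by simp) hl'
      refine ⟨c :: ts', ?_, ?_⟩
      · rw [heq]; simp [liftPath]
      · rw [List.cons_append, prn_chain'_cons]
        exact ⟨hE, hch⟩
  termination_by L => L.length
  decreasing_by simp

lemma struct_R2P :
    ∀ (L : List (V × Bool)) (a b : V),
      L.Chain' (prnAdj E) → L.head? = some (a, false) → L.getLast? = some (b, true) →
      ∃ l, L = liftPath l ∧ l.head? = some a ∧ l.getLast? = some b ∧ l.Chain' E
  | [], a, b, _, hh, _ => by simp at hh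
  | [x], a, b, _, hh, hl => by
      simp only [List.head?_cons, Option.some_inj, List.getLast?_singleton] at hh hl
      rw [hh] at hl; simp at hl
  | [x, y], a, b, hc, hh, hl => by
      simp only [List.head?_cons, Option.some_inj] at hh
      subst hh
      simp only [List.getLast?_cons_cons, List.getLast?_singleton, Option.some_inj] at hl
      subst hl
      rw [prn_chain'_cons] at hc
      have hab : a = b := by
        rcases hc.1 with ⟨h1, _, _⟩ | ⟨_, h2, _⟩
        · exact h1
        · simp at h2
      exact ⟨[a], by simp [liftPath, hab], by simp, by simp [hab], by simp⟩
  | x :: y :: z :: rest', a, b, hc, hh, hl => by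
      simp only [List.head?_cons, Option.some_inj] at hh
      subst hh
      rw [prn_chain'_cons] at hc
      obtain ⟨hxy, hc⟩ := hc
      obtain rfl : y = (a, true) := by
        obtain ⟨y1, y2⟩ := y
        rcases hxy with ⟨h1, h2, h3⟩ | ⟨_, h2, _⟩ <;> simp_all
      rw [prn_chain'_cons] at hc
      obtain ⟨hyz, hc⟩ := hc
      obtain ⟨c, rfl⟩ : ∃ c, z = (c, false) := by
        rcases hyz with ⟨_, h2, _⟩ | ⟨_, _, h3⟩
        · simp at h2
        · exact ⟨z.1, by simp [h3.symm]⟩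
      have hE : E a c := by
        rcases hyz with ⟨_, h2, _⟩ | ⟨h1, _, _⟩
        · simp at h2
        · exact h1
      have hl' : (((c, false) : V × Bool) :: rest').getLast? = some (b, true) := by
        rw [List.getLast?_cons_cons, List.getLast?_cons_cons] at hl
        exact hl
      obtain ⟨l', heq, hh', hl'', hch⟩ := struct_R2P ((c, false) :: rest') c b hc (by simp) hl'
      obtain ⟨l'', rfl⟩ : ∃ l'', l' = c :: l'' := by
        cases l' with
        | nil => simp at hh'
        | cons w r => simp only [List.head?_cons, Option.some_inj] at hh'; exact ⟨r, by rw [hh']⟩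
      refine ⟨a :: c :: l'', ?_, by simp, ?_, ?_⟩
      · rw [heq]; simp [liftPath]
      · rw [List.getLast?_cons_cons]; simpa using hl''
      · exact prn_chain'_cons.mpr ⟨hE, hch⟩
  termination_by L => L.length
  decreasing_by simp

lemma isSimplePathFrom_prn_iff {ι o : V} {L : List (V × Bool)} :
    IsSimplePathFrom (prnAdj E) (ι, false) (o, true) L ↔
      ∃ l, IsSimplePathFrom E ι o l ∧ L = liftPath l := by
  constructor
  · rintro ⟨⟨hne, hch, hnd⟩, hh, hl⟩
    obtain ⟨l, rfl, hh', hl', hch'⟩ := struct_R2P L ι o hch hh hl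
    refine ⟨l, ⟨⟨?_, hch', nodup_liftPath.mp hnd⟩, hh', hl'⟩, rfl⟩
    rintro rfl; simp at hh'
  · rintro ⟨l, ⟨⟨hne, hch, hnd⟩, hh, hl⟩, rfl⟩
    refine ⟨⟨liftPath_ne_nil hne, chain'_liftPath hch, nodup_liftPath.mpr hnd⟩, ?_, ?_⟩
    · rw [head?_liftPath, hh]; rfl
    · rw [getLast?_liftPath, hl]; rfl

lemma isAppendageNode_prn_iff {ι o v : V} {b : Bool} :
    IsAppendageNode (prnAdj E) (ι, false) (o, true) (v, b) ↔ IsAppendageNode E ι o v := by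
  unfold IsAppendageNode IsSimpleNode
  constructor
  · intro h ⟨l, hl, hv⟩
    exact h ⟨liftPath l, isSimplePathFrom_prn_iff.mpr ⟨l, hl, rfl⟩, mem_liftPath.mpr hv⟩
  · intro h ⟨L, hL, hv⟩
    obtain ⟨l, hl, rfl⟩ := isSimplePathFrom_prn_iff.mp hL
    obtain ⟨v1, b1⟩ := (v, b)
    exact h ⟨l, hl, mem_liftPath.mp hv⟩

lemma nodup_P2R {a b : V} {ts : List V} (h : (a :: (ts ++ [b])).Nodup) (hne : a ≠ b) :
    ((a, true) :: (liftPath ts ++ [(b, false)])).Nodup := by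
  simp only [List.nodup_cons, List.mem_append, List.mem_singleton, List.nodup_append,
    List.nodup_singleton, List.disjoint_singleton, true_and] at h ⊢
  push_neg at h ⊢
  obtain ⟨⟨ha, -⟩, hts, -, hb⟩ := h
  exact ⟨⟨fun hm => ha (mem_liftPath.mp hm), fun e => hne (congrArg Prod.fst e)⟩,
    nodup_liftPath.mpr hts, ⟨by simp, by simp⟩,
    fun x hx y hy e => by subst hy e; exact hb b (mem_liftPath.mp hx) b rfl rfl⟩

lemma nodup_P2R_rev {a b : V} {ts : List V} (hne : a ≠ b)
    (h : ((a, true) :: (liftPath ts ++ [(b, false)])).Nodup) :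
    (a :: (ts ++ [b])).Nodup := by
  simp only [List.nodup_cons, List.mem_append, List.mem_singleton, List.nodup_append,
    List.nodup_singleton, List.disjoint_singleton, true_and] at h ⊢
  push_neg at h ⊢
  obtain ⟨⟨ha, -⟩, hts, -, hb⟩ := h
  exact ⟨⟨fun hm => ha (mem_liftPath.mpr hm), hne⟩,
    nodup_liftPath.mp hts, ⟨by simp, by simp⟩,
    fun x hx y hy e => hb (y, false) (mem_liftPath.mpr (e ▸ hx)) (b, false) rfl (by rw [hy])⟩

lemma getLast?_P2R {a b : V} {ts : List V} :
    (((a, true) : V × Bool) :: (liftPath ts ++ [(b, false)])).getLast? = some (b, false) := by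
  rw [show ((a, true) : V × Bool) :: (liftPath ts ++ [(b, false)]) =
    (((a, true) : V × Bool) :: liftPath ts) ++ [(b, false)] by simp, List.getLast?_concat]

end Aux

/-- For distinct appendage nodes `σ₁, σ₂` of the GRN, there is an
appendage path from `σ₁` to `σ₂` in the GRN iff there is an appendage path from
`(σ₁,P)` to `(σ₂,R)` in the PRN; moreover every appendage path from `(σ₁,P)` to
`(σ₂,R)` in the PRN has the form
`(σ₁,P) → (τ₁,R) → (τ₁,P) → ⋯ → (τ_m,R) → (τ_m,P) → (σ₂,R)`
for some appendage path `σ₁ → τ₁ → ⋯ → τ_m → σ₂` in the GRN. -/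
theorem stmt_10 {V : Type*} [Fintype V] (E : V → V → Prop) (ι o σ₁ σ₂ : V)
    (hne : σ₁ ≠ σ₂)
    (h₁ : IsAppendageNode E ι o σ₁) (h₂ : IsAppendageNode E ι o σ₂) :
    ((∃ l, IsAppendagePath E ι o σ₁ σ₂ l) ↔
      (∃ L, IsAppendagePath (prnAdj E) (ι, false) (o, true) (σ₁, true) (σ₂, false) L)) ∧
    (∀ L, IsAppendagePath (prnAdj E) (ι, false) (o, true) (σ₁, true) (σ₂, false) L →
      ∃ ts : List V, IsAppendagePath E ι o σ₁ σ₂ (σ₁ :: (ts ++ [σ₂])) ∧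
        L = (σ₁, true) :: (liftPath ts ++ [(σ₂, false)])) := by
  have key : ∀ L, IsAppendagePath (prnAdj E) (ι, false) (o, true) (σ₁, true) (σ₂, false) L →
      ∃ ts : List V, IsAppendagePath E ι o σ₁ σ₂ (σ₁ :: (ts ++ [σ₂])) ∧
        L = (σ₁, true) :: (liftPath ts ++ [(σ₂, false)]) := by
    rintro L ⟨⟨⟨hLne, hLch, hLnd⟩, hLh, hLl⟩, hLapp⟩
    obtain ⟨ts, rfl, hch⟩ := struct_P2R L σ₁ σ₂ hLch hLh hLl
    have hnd : (σ₁ :: (ts ++ [σ₂])).Nodup := nodup_P2R_rev hne hLnd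
    have hs2 : σ₂ ∉ ts := by
      have h' := hnd.of_cons
      rw [List.nodup_append] at h'
      exact fun hm => h'.2.2 σ₂ hm σ₂ (by simp) rfl
    refine ⟨ts, ⟨⟨⟨by simp, hch, hnd⟩, by simp, ?_⟩, ?_⟩, rfl⟩
    · rw [show σ₁ :: (ts ++ [σ₂]) = (σ₁ :: ts) ++ [σ₂] by simp, List.getLast?_concat]
    · intro v hv hv1 hv2
      have hvts : v ∈ ts := by
        simp only [List.mem_cons, List.mem_append, List.mem_singleton, List.not_mem_nil,
          or_false] at hv
        rcases hv with rfl | hv | rfl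
        · exact absurd rfl hv1
        · exact hv
        · exact absurd rfl hv2
      refine isAppendageNode_prn_iff.mp (hLapp (v, false) ?_ (by simp) ?_)
      · exact List.mem_cons_of_mem _ (List.mem_append_left _ (mem_liftPath.mpr hvts))
      · intro h
        exact hs2 (by rw [show v = σ₂ from congrArg Prod.fst h] at hvts; exact hvts)
  refine ⟨⟨?_, ?_⟩, key⟩
  · rintro ⟨l, ⟨⟨⟨hlne, hlch, hlnd⟩, hlh, hll⟩, happ⟩⟩
    obtain ⟨t, rfl⟩ : ∃ t, l = σ₁ :: t := by
      cases l with
      | nil => simp at hlh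
      | cons x t => simp only [List.head?_cons, Option.some_inj] at hlh; exact ⟨t, by rw [hlh]⟩
    have ht : t ≠ [] := by
      rintro rfl
      simp only [List.getLast?_singleton, Option.some_inj] at hll
      exact hne hll
    obtain ⟨ts, z, rfl⟩ := (List.eq_nil_or_concat' t).resolve_left ht
    have hz : z = σ₂ := by
      rw [show σ₁ :: (ts ++ [z]) = (σ₁ :: ts) ++ [z] by simp, List.getLast?_concat] at hll
      exact Option.some_inj.mp hll
    rw [hz] at hlch hlnd happ
    have hall : ∀ v ∈ σ₁ :: (ts ++ [σ₂]), IsAppendageNode E ι o v := by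
      intro v hv
      by_cases hv1 : v = σ₁
      · exact hv1 ▸ h₁
      by_cases hv2 : v = σ₂
      · exact hv2 ▸ h₂
      exact happ v hv hv1 hv2
    refine ⟨(σ₁, true) :: (liftPath ts ++ [(σ₂, false)]),
      ⟨⟨by simp, chain'_P2R hlch, nodup_P2R hlnd hne⟩, by simp, getLast?_P2R⟩, ?_⟩
    rintro ⟨x1, x2⟩ hx hx1 hx2
    simp only [List.mem_cons, List.mem_append, List.mem_singleton, List.not_mem_nil,
      or_false] at hx
    rcases hx with hx | hx | hx
    · exact absurd hx hx1
    · exact isAppendageNode_prn_iff.mpr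
        (hall x1 (List.mem_cons_of_mem _ (List.mem_append_left _ (mem_liftPath.mp hx))))
    · exact absurd hx hx2
  · rintro ⟨L, hL⟩
    obtain ⟨ts, hl, -⟩ := key L hL
    exact ⟨_, hl⟩
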